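/- Let d ≥ 1, let u₁, u₂ : ℝ^d → (0,∞) be continuous, strictly positive, integrable functions with ∫u₁ = ∫u₂ = 1, let α = (α₁,…,α_d) with each α_j ∈ (0,1), let K, δ > 0, and fix j ∈ {1,…,d}. Assume that |Q_α^j(u₁)| ≤ K and |Q_α^j(u₂)| ≤ K, and that u₁(x) ≥ δ for every x with |x_j| ≤ K and max_{k≠j} |x_k| ≤ 2K. Then |Q_α^j(u₁) − Q_α^j(u₂)| ≤ ‖u₁ − u₂‖_L / (δ (4K)^{d−1}). -/

import Mathlib

open MeasureTheory Real Set

/-- Multidimensional Lipschitz estimate for the `j`-th coordinate of the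
quantile vector in `L¹`-distance: if both `j`-th quantile coordinates lie in `[-K, K]` and
`u₁ ≥ δ` on the slab `{|x_j| ≤ K, |x_k| ≤ 2K (k ≠ j)}`, then
`|Q_α^j(u₁) - Q_α^j(u₂)| ≤ ‖u₁ - u₂‖_{L¹} / (δ (4K)^{d-1})`. -/
theorem quantile_lipschitz_in_L1_multidim
    (d : ℕ) (hd : 1 ≤ d)
    (u₁ u₂ : EuclideanSpace ℝ (Fin d) → ℝ)
    (h₁c : Continuous u₁) (h₂c : Continuous u₂)
    (h₁p : ∀ x, 0 < u₁ x) (h₂p : ∀ x, 0 < u₂ x)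
    (h₁i : Integrable u₁) (h₂i : Integrable u₂)
    (h₁m : ∫ x, u₁ x = 1) (h₂m : ∫ x, u₂ x = 1)
    (α : Fin d → ℝ) (hα : ∀ j, α j ∈ Ioo (0 : ℝ) 1)
    (K δ : ℝ) (hK : 0 < K) (hδ : 0 < δ)
    (j : Fin d)
    (q₁ q₂ : Fin d → ℝ)
    (hq₁ : ∀ i, ∫ x in {x : EuclideanSpace ℝ (Fin d) | x i ≤ q₁ i}, u₁ x = α i)
    (hq₂ : ∀ i, ∫ x in {x : EuclideanSpace ℝ (Fin d) | x i ≤ q₂ i}, u₂ x = α i)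
    (hq₁K : |q₁ j| ≤ K) (hq₂K : |q₂ j| ≤ K)
    (hlow : ∀ x : EuclideanSpace ℝ (Fin d),
      |x j| ≤ K → (∀ k, k ≠ j → |x k| ≤ 2 * K) → δ ≤ u₁ x) :
    |q₁ j - q₂ j| ≤ (∫ x, |u₁ x - u₂ x|) / (δ * (4 * K) ^ (d - 1)) := by
  classical
  set L := ∫ x, |u₁ x - u₂ x| with hLdef
  have hc0 : (0:ℝ) < δ * (4 * K) ^ (d - 1) := by positivity
  rw [le_div_iff₀ hc0]
  set a := min (q₁ j) (q₂ j) with ha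
  set b := max (q₁ j) (q₂ j) with hb
  have hab : a ≤ b := min_le_max
  have haK : -K ≤ a := le_min (abs_le.mp hq₁K).1 (abs_le.mp hq₂K).1
  have hbK : b ≤ K := max_le (abs_le.mp hq₁K).2 (abs_le.mp hq₂K).2
  -- measurability of coordinate
  have hproj : Measurable fun x : EuclideanSpace ℝ (Fin d) => x j := (EuclideanSpace.proj j).continuous.measurable
  set S : ℝ → Set (EuclideanSpace ℝ (Fin d)) := fun c => {x : EuclideanSpace ℝ (Fin d) | x j ≤ c} with hSdef
  have hSm : ∀ c, MeasurableSet (S c) := fun c => measurableSet_le hproj measurable_const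
  -- the box T
  set s : Fin d → Set ℝ := fun i => if i = j then Ioc a b else Icc (-(2*K)) (2*K) with hsdef
  set T : Set (EuclideanSpace ℝ (Fin d)) := (⇑(MeasurableEquiv.toLp 2 (Fin d → ℝ)).symm)⁻¹' (univ.pi s) with hTdef
  have hsm : ∀ i, MeasurableSet (s i) := by
    intro i; by_cases h : i = j <;> simp [hsdef, h, measurableSet_Ioc, measurableSet_Icc]
  have hpim : MeasurableSet (univ.pi s) := MeasurableSet.univ_pi hsm
  have hTm : MeasurableSet T := (MeasurableEquiv.toLp 2 (Fin d → ℝ)).symm.measurable hpim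
  have hmemT : ∀ x : EuclideanSpace ℝ (Fin d), x ∈ T ↔ ∀ i, x i ∈ s i := by
    intro x
    simp only [hTdef, mem_preimage, mem_pi, mem_univ, forall_true_left]
    rfl
  -- volume of T
  have hvolT : volume T = ENNReal.ofReal (b - a) * ENNReal.ofReal (4*K) ^ (d-1) := by
    rw [hTdef, (EuclideanSpace.volume_preserving_symm_measurableEquiv_toLp (Fin d)).measure_preimage
      hpim.nullMeasurableSet, volume_pi_pi]
    rw [← Finset.prod_erase_mul _ _ (Finset.mem_univ j)]
    have h1 : volume (s j) = ENNReal.ofReal (b - a) := by simp [hsdef]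
    have h2 : ∀ i ∈ Finset.univ.erase j, volume (s i) = ENNReal.ofReal (4*K) := by
      intro i hi
      have : i ≠ j := Finset.ne_of_mem_erase hi
      rw [hsdef]; simp only [this, if_false]
      rw [Real.volume_Icc]; congr 1; ring
    rw [Finset.prod_congr rfl h2, Finset.prod_const, h1, mul_comm]
    congr 2
    rw [Finset.card_erase_of_mem (Finset.mem_univ j)]
    simp
  have hvolT_ne : volume T ≠ ⊤ := by
    rw [hvolT]; exact ENNReal.mul_ne_top ENNReal.ofReal_ne_top (ENNReal.pow_ne_top ENNReal.ofReal_ne_top)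
  have hvolT_toReal : (volume T).toReal = (b - a) * (4*K)^(d-1) := by
    rw [hvolT, ENNReal.toReal_mul, ENNReal.toReal_pow, ENNReal.toReal_ofReal (by linarith),
      ENNReal.toReal_ofReal (by positivity)]
  -- lower bound for u₁ on T
  have hTlow : ∀ x ∈ T, δ ≤ u₁ x := by
    intro x hx
    rw [hmemT] at hx
    have hxj := hx j
    simp only [hsdef, if_pos rfl, mem_Ioc] at hxj
    refine hlow x (abs_le.mpr ⟨by linarith [hxj.1], le_trans hxj.2 hbK⟩) ?_
    intro k hk
    have := hx k
    simp only [hsdef, if_neg hk, mem_Icc] at this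
    exact abs_le.mpr ⟨by linarith [this.1], this.2⟩
  -- T ⊆ S b \ S a
  have hTsub : T ⊆ S b \ S a := by
    intro x hx
    rw [hmemT] at hx
    have hxj := hx j
    simp only [hsdef, if_pos rfl, mem_Ioc] at hxj
    exact ⟨hxj.2, not_le.mpr hxj.1⟩
  -- lower bound: δ * vol(T) ≤ ∫_T u₁ ≤ ∫_{S b \ S a} u₁
  have h1 : δ * ((b - a) * (4*K)^(d-1)) ≤ ∫ x in T, u₁ x := by
    rw [← hvolT_toReal]
    have := setIntegral_ge_of_const_le hTm hvolT_ne hTlow h₁i.integrableOn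
    rw [smul_eq_mul, measureReal_def] at this
    linarith
  have h2 : ∫ x in T, u₁ x ≤ ∫ x in S b \ S a, u₁ x := by
    refine setIntegral_mono_set h₁i.integrableOn ?_ (HasSubset.Subset.eventuallyLE hTsub)
    exact Filter.Eventually.of_forall fun x => (h₁p x).le
  have hsplit : ∫ x in S b, u₁ x = (∫ x in S a, u₁ x) + ∫ x in S b \ S a, u₁ x := by
    have hcup : S a ∪ (S b \ S a) = S b :=
      union_diff_cancel (fun x hx => le_trans hx hab)
    calc ∫ x in S b, u₁ x = ∫ x in S a ∪ (S b \ S a), u₁ x := by rw [hcup]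
      _ = (∫ x in S a, u₁ x) + ∫ x in S b \ S a, u₁ x :=
          setIntegral_union disjoint_sdiff_self_right ((hSm b).diff (hSm a))
            h₁i.integrableOn h₁i.integrableOn
  -- identify the difference
  set I₁ := ∫ x in S (q₂ j), u₁ x with hI₁
  set I₂ := ∫ x in S (q₂ j), u₂ x with hI₂
  have hI₂α : I₂ = α j := hq₂ j
  have hq₁α : ∫ x in S (q₁ j), u₁ x = α j := hq₁ j
  have hdiff : (∫ x in S b, u₁ x) - ∫ x in S a, u₁ x ≤ |I₁ - I₂| := by
    rcases le_total (q₁ j) (q₂ j) with h | h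
    · have hab1 : a = q₁ j := min_eq_left h
      have hab2 : b = q₂ j := max_eq_right h
      rw [hab1, hab2, hq₁α, ← hI₂α, ← hI₁]
      exact le_abs_self _
    · have hab1 : a = q₂ j := min_eq_right h
      have hab2 : b = q₁ j := max_eq_left h
      rw [hab1, hab2, hq₁α, ← hI₂α, ← hI₁]
      rw [abs_sub_comm]
      exact le_abs_self _
  -- |I₁ - I₂| ≤ L
  have habs : |I₁ - I₂| ≤ L := by
    have hsub : I₁ - I₂ = ∫ x in S (q₂ j), (u₁ x - u₂ x) :=
      (integral_sub h₁i.integrableOn h₂i.integrableOn).symm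
    rw [hsub]
    calc |∫ x in S (q₂ j), (u₁ x - u₂ x)| ≤ ∫ x in S (q₂ j), |u₁ x - u₂ x| := by
          simpa [Real.norm_eq_abs] using
            norm_integral_le_integral_norm (μ := volume.restrict (S (q₂ j)))
              (fun x => u₁ x - u₂ x)
      _ ≤ L := by
          refine setIntegral_le_integral (h₁i.sub h₂i).abs ?_
          exact Filter.Eventually.of_forall fun x => abs_nonneg _
  -- finish
  have hba : b - a = |q₁ j - q₂ j| := by
    rw [ha, hb, ← max_sub_min_eq_abs]
    simp [max_comm, min_comm]
  calc |q₁ j - q₂ j| * (δ * (4 * K) ^ (d - 1))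
      = δ * ((b - a) * (4 * K) ^ (d - 1)) := by rw [← hba]; ring
    _ ≤ ∫ x in T, u₁ x := h1
    _ ≤ ∫ x in S b \ S a, u₁ x := h2
    _ = (∫ x in S b, u₁ x) - ∫ x in S a, u₁ x := by linarith [hsplit]
    _ ≤ |I₁ - I₂| := hdiff
    _ ≤ L := habs
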